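/- Let n ≥ 3 and let B be the real-linear map on Hermitian n×n complex matrices defined in the context. Then there do not exist a matrix H ∈ M_n(ℂ) and a real-linear map B' on Hermitian n×n complex matrices with B'(X) positive semidefinite for every positive semidefinite X, such that B(X) = H X + X H* + B'(X) for every Hermitian X. (Equivalently, B is not the sum of an endomorphism of the PSD cone and an element of the Lie algebra of its automorphism group.) -/

import Mathlib

open Finset in
section
end


open Matrix
open scoped ComplexOrder

/-- The exotic drift `B` on complex Hermitian `n × n` matrices: with `p = (n-2)(n²-n-1)/2` and
`q = (n-1)(n²-n-1)`, and indices taken `0`-based and cyclically, its diagonal entries are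
`(B X)₀₀ = X₁₁ - X₀₀` and `(B X)_{ll} = (n-1)² (X_{l+1,l+1} - X_{ll})` for `l ≠ 0`, while its
off-diagonal entries are `(B X)_{lm} = -p X_{lm}` if `l = 0` or `m = 0`, and
`(B X)_{lm} = -q X_{lm}` otherwise (the coefficients being real, this matches the prescription
`(B X)_{ml} = conj((B X)_{lm})` on Hermitian matrices). -/
noncomputable def BmapC (n : ℕ) [NeZero n] (X : Matrix (Fin n) (Fin n) ℂ) :
    Matrix (Fin n) (Fin n) ℂ :=
  Matrix.of fun l m =>
    if l = m then
      (if l = 0 then 1 else ((n : ℝ) - 1) ^ 2) • (X (l + 1) (l + 1) - X l l)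
    else if l = 0 ∨ m = 0 then
      (-(((n : ℝ) - 2) * ((n : ℝ) ^ 2 - n - 1) / 2)) • X l m
    else
      (-(((n : ℝ) - 1) * ((n : ℝ) ^ 2 - n - 1))) • X l m

open Matrix Finset
open scoped ComplexOrder

namespace BmapCProof

variable {n : ℕ} [NeZero n]

noncomputable def pp (n : ℕ) : ℝ := ((n : ℝ) - 2) * ((n : ℝ) ^ 2 - n - 1) / 2
noncomputable def qq (n : ℕ) : ℝ := ((n : ℝ) - 1) * ((n : ℝ) ^ 2 - n - 1)
noncomputable def cc (n : ℕ) [NeZero n] (l : Fin n) : ℝ := if l = 0 then 1 else ((n : ℝ) - 1) ^ 2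
noncomputable def offc (n : ℕ) [NeZero n] (l m : Fin n) : ℝ :=
  if l = m then 0 else if l = 0 ∨ m = 0 then pp n else qq n

/-- rank-one real matrix -/
noncomputable def Xv (u : Fin n → ℝ) : Matrix (Fin n) (Fin n) ℂ :=
  Matrix.of fun i j => ((u i * u j : ℝ) : ℂ)

lemma Xv_posSemidef (u : Fin n → ℝ) : (Xv u).PosSemidef := by
  rw [posSemidef_iff_dotProduct_mulVec]
  constructor
  · ext i j
    simp [Xv, Matrix.conjTranspose_apply, Complex.conj_ofReal, mul_comm]
  · intro x
    have hq : star x ⬝ᵥ ((Xv u) *ᵥ x) = star (∑ j, (u j : ℂ) * x j) * (∑ j, (u j : ℂ) * x j) := by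
      simp only [dotProduct, mulVec, Xv, Matrix.of_apply, star_sum, star_mul', Complex.star_def,
        Complex.conj_ofReal, Finset.mul_sum, Finset.sum_mul, Pi.star_apply]
      rw [Finset.sum_comm]
      refine Finset.sum_congr rfl fun i _ => Finset.sum_congr rfl fun j _ => ?_
      push_cast
      ring
    rw [hq]
    exact star_mul_self_nonneg _

omit [NeZero n] in
lemma quad_exp (M : Matrix (Fin n) (Fin n) ℂ) (y : Fin n → ℂ) :
    star y ⬝ᵥ (M *ᵥ y) = ∑ i, ∑ j, star (y i) * M i j * y j := by
  simp only [dotProduct, mulVec, Pi.star_apply, Finset.mul_sum]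
  exact Finset.sum_congr rfl fun i _ => Finset.sum_congr rfl fun j _ => by ring

def sg (ε : Fin n → Bool) (l : Fin n) : ℝ := if ε l then 1 else -1

omit [NeZero n] in
lemma sg_cases (ε : Fin n → Bool) (l : Fin n) : sg ε l = 1 ∨ sg ε l = -1 := by
  unfold sg; split <;> simp

omit [NeZero n] in
lemma sum_sg_ne {i j : Fin n} (h : i ≠ j) :
    ∑ ε : Fin n → Bool, sg ε i * sg ε j = 0 := by
  classical
  refine Finset.sum_ninvolution (fun ε => Function.update ε i (!(ε i))) ?_ ?_
    (fun _ => Finset.mem_univ _) ?_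
  · intro ε
    have h1 : sg (Function.update ε i (!(ε i))) i = -(sg ε i) := by
      unfold sg
      rcases hb : ε i <;> simp [Function.update_self, hb]
    have h2 : sg (Function.update ε i (!(ε i))) j = sg ε j := by
      unfold sg
      rw [Function.update_of_ne (Ne.symm h)]
    rw [h1, h2]; ring
  · intro ε _
    intro hc
    have := congrFun hc i
    simp at this
  · intro ε
    ext l
    by_cases hl : l = i
    · subst hl; simp
    · simp [Function.update_of_ne hl]

omit [NeZero n] in
lemma sum_sg_eq (i : Fin n) :
    ∑ ε : Fin n → Bool, sg ε i * sg ε i = (2 : ℝ) ^ n := by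
  classical
  have : ∀ ε : Fin n → Bool, sg ε i * sg ε i = 1 := by
    intro ε; rcases sg_cases ε i with h | h <;> rw [h] <;> norm_num
  rw [Finset.sum_congr rfl fun ε _ => this ε, Finset.sum_const, Finset.card_univ]
  simp [Fintype.card_fun]

omit [NeZero n] in
lemma sum_sg (i j : Fin n) :
    ∑ ε : Fin n → Bool, sg ε i * sg ε j = if i = j then (2 : ℝ) ^ n else 0 := by
  by_cases h : i = j
  · subst h; rw [sum_sg_eq]; simp
  · rw [sum_sg_ne h]; simp [h]
noncomputable def PB (n : ℕ) [NeZero n] (v w : Fin n → ℝ) : ℝ :=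
  (∑ i, cc n i * ((v (i + 1)) ^ 2 - (v i) ^ 2) * (w i) ^ 2)
    - ∑ i, ∑ j, offc n i j * (v i * w i) * (v j * w j)

lemma PB_eq_dsum (v w : Fin n → ℝ) :
    PB n v w = ∑ i, ∑ j,
      (if i = j then cc n i * ((v (i + 1)) ^ 2 - (v i) ^ 2) * (w i) ^ 2
       else -(offc n i j * (v i * w i) * (v j * w j))) := by
  have key : ∀ i : Fin n, ∑ j,
      (if i = j then cc n i * ((v (i + 1)) ^ 2 - (v i) ^ 2) * (w i) ^ 2
       else -(offc n i j * (v i * w i) * (v j * w j)))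
      = cc n i * ((v (i + 1)) ^ 2 - (v i) ^ 2) * (w i) ^ 2
        - ∑ j, offc n i j * (v i * w i) * (v j * w j) := by
    intro i
    have : ∀ j : Fin n,
        (if i = j then cc n i * ((v (i + 1)) ^ 2 - (v i) ^ 2) * (w i) ^ 2
         else -(offc n i j * (v i * w i) * (v j * w j)))
        = (if i = j then cc n i * ((v (i + 1)) ^ 2 - (v i) ^ 2) * (w i) ^ 2 else 0)
          - offc n i j * (v i * w i) * (v j * w j) := by
      intro j
      by_cases h : i = j
      · subst h; simp [offc]
      · simp [h]
    rw [Finset.sum_congr rfl fun j _ => this j, Finset.sum_sub_distrib, Finset.sum_ite_eq]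
    simp
  rw [Finset.sum_congr rfl fun i _ => key i, Finset.sum_sub_distrib, PB]

/-- The quadratic form of `BmapC` on a sign-twisted real rank-one matrix. -/
lemma qB_eq (v w d : Fin n → ℝ) (hd : ∀ l, d l = 1 ∨ d l = -1) :
    star (fun l => ((d l * w l : ℝ) : ℂ)) ⬝ᵥ
      (BmapC n (Xv (fun l => d l * v l)) *ᵥ (fun l => ((d l * w l : ℝ) : ℂ)))
      = ((PB n v w : ℝ) : ℂ) := by
  rw [quad_exp, PB_eq_dsum]
  push_cast
  refine Finset.sum_congr rfl fun i _ => Finset.sum_congr rfl fun j _ => ?_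
  simp only [BmapC, Xv, Matrix.of_apply, Pi.star_apply, Complex.star_def, _root_.map_mul, _root_.map_one, map_neg, Complex.conj_ofReal]
  by_cases h : i = j
  · subst h
    simp only [if_pos rfl]
    rw [Complex.real_smul]
    by_cases h0 : i = 0
    · simp only [if_pos h0, cc, if_pos h0]
      push_cast
      rcases hd i with h1 | h1 <;> rcases hd (i + 1) with h2 | h2 <;> rw [h1, h2] <;> push_cast <;> ring
    · simp only [if_neg h0, cc, if_neg h0]
      push_cast
      rcases hd i with h1 | h1 <;> rcases hd (i + 1) with h2 | h2 <;> rw [h1, h2] <;> push_cast <;> ring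
  · simp only [if_neg h, offc, if_neg h]
    by_cases h0 : i = 0 ∨ j = 0
    · simp only [if_pos h0, pp]
      rw [Complex.real_smul]
      push_cast
      rcases hd i with h1 | h1 <;> rcases hd j with h2 | h2 <;> rw [h1, h2] <;> push_cast <;> ring
    · simp only [if_neg h0, qq]
      rw [Complex.real_smul]
      push_cast
      rcases hd i with h1 | h1 <;> rcases hd j with h2 | h2 <;> rw [h1, h2] <;> push_cast <;> ring
omit [NeZero n] in
lemma qH_eq (v w d : Fin n → ℝ) (hd : ∀ l, d l = 1 ∨ d l = -1)
    (H : Matrix (Fin n) (Fin n) ℂ) :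
    star (fun l => ((d l * w l : ℝ) : ℂ)) ⬝ᵥ
      ((H * Xv (fun l => d l * v l)) *ᵥ fun l => ((d l * w l : ℝ) : ℂ))
    = (∑ i, ∑ a, ((d i * w i : ℝ) : ℂ) * H i a * ((d a * v a : ℝ) : ℂ))
        * ((∑ j, v j * w j : ℝ) : ℂ) := by
  rw [quad_exp]
  have step : ∀ i j : Fin n,
      star ((fun l => ((d l * w l : ℝ) : ℂ)) i) * (H * Xv (fun l => d l * v l)) i j
          * ((fun l => ((d l * w l : ℝ) : ℂ)) j)
      = (∑ a, ((d i * w i : ℝ) : ℂ) * H i a * ((d a * v a : ℝ) : ℂ)) * ((v j * w j : ℝ) : ℂ) := by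
    intro i j
    simp only [Matrix.mul_apply, Xv, Matrix.of_apply, Pi.star_apply, Complex.star_def,
      _root_.map_mul, Complex.conj_ofReal, Finset.sum_mul, Finset.mul_sum]
    refine Finset.sum_congr rfl fun a _ => ?_
    rcases hd j with h1 | h1 <;> rw [h1] <;> push_cast <;> ring
  rw [Finset.sum_congr rfl fun i _ => Finset.sum_congr rfl fun j _ => step i j]
  rw [Complex.ofReal_sum, Finset.sum_mul_sum]

omit [NeZero n] in
lemma qHc_eq (v w d : Fin n → ℝ) (hd : ∀ l, d l = 1 ∨ d l = -1)
    (H : Matrix (Fin n) (Fin n) ℂ) :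
    star (fun l => ((d l * w l : ℝ) : ℂ)) ⬝ᵥ
      ((Xv (fun l => d l * v l) * Hᴴ) *ᵥ fun l => ((d l * w l : ℝ) : ℂ))
    = ((∑ j, v j * w j : ℝ) : ℂ)
        * ∑ i, ∑ a, ((d i * w i : ℝ) : ℂ) * (starRingEnd ℂ) (H i a) * ((d a * v a : ℝ) : ℂ) := by
  rw [quad_exp]
  have step : ∀ i j : Fin n,
      star ((fun l => ((d l * w l : ℝ) : ℂ)) i) * (Xv (fun l => d l * v l) * Hᴴ) i j
          * ((fun l => ((d l * w l : ℝ) : ℂ)) j)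
      = ((v i * w i : ℝ) : ℂ) * ∑ a, ((d j * w j : ℝ) : ℂ) * (starRingEnd ℂ) (H j a)
          * ((d a * v a : ℝ) : ℂ) := by
    intro i j
    simp only [Matrix.mul_apply, Xv, Matrix.of_apply, Pi.star_apply, Matrix.conjTranspose_apply,
      Complex.star_def, _root_.map_mul, Complex.conj_ofReal, Finset.sum_mul, Finset.mul_sum]
    refine Finset.sum_congr rfl fun a _ => ?_
    rcases hd i with h1 | h1 <;> rw [h1] <;> push_cast <;> ring
  rw [Finset.sum_congr rfl fun i _ => Finset.sum_congr rfl fun j _ => step i j]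
  rw [Complex.ofReal_sum, Finset.sum_mul_sum]

omit [NeZero n] in
lemma sum_qsg (H : Matrix (Fin n) (Fin n) ℂ) (v w : Fin n → ℝ) :
    ∑ ε : Fin n → Bool, ∑ i, ∑ a, ((sg ε i * w i : ℝ) : ℂ) * H i a * ((sg ε a * v a : ℝ) : ℂ)
      = (((2 : ℝ) ^ n : ℝ) : ℂ) * ∑ i, ((w i * v i : ℝ) : ℂ) * H i i := by
  classical
  rw [Finset.sum_comm]
  have inner : ∀ i : Fin n,
      ∑ ε : Fin n → Bool, ∑ a, ((sg ε i * w i : ℝ) : ℂ) * H i a * ((sg ε a * v a : ℝ) : ℂ)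
      = (((2 : ℝ) ^ n : ℝ) : ℂ) * (((w i * v i : ℝ) : ℂ) * H i i) := by
    intro i
    rw [Finset.sum_comm]
    have pa : ∀ a : Fin n,
        ∑ ε : Fin n → Bool, ((sg ε i * w i : ℝ) : ℂ) * H i a * ((sg ε a * v a : ℝ) : ℂ)
        = (((if i = a then (2 : ℝ) ^ n else 0) : ℝ) : ℂ) * (((w i * v a : ℝ) : ℂ) * H i a) := by
      intro a
      have hpt : ∀ ε : Fin n → Bool,
          ((sg ε i * w i : ℝ) : ℂ) * H i a * ((sg ε a * v a : ℝ) : ℂ)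
          = ((sg ε i * sg ε a : ℝ) : ℂ) * (((w i * v a : ℝ) : ℂ) * H i a) := by
        intro ε; push_cast; ring
      rw [Finset.sum_congr rfl fun ε _ => hpt ε, ← Finset.sum_mul, ← Complex.ofReal_sum,
        sum_sg i a]
    rw [Finset.sum_congr rfl fun a _ => pa a]
    have : ∀ a : Fin n, (((if i = a then (2 : ℝ) ^ n else 0) : ℝ) : ℂ)
        * (((w i * v a : ℝ) : ℂ) * H i a)
        = if i = a then (((2 : ℝ) ^ n : ℝ) : ℂ) * (((w i * v i : ℝ) : ℂ) * H i i) else 0 := by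
      intro a
      by_cases h : i = a
      · subst h; simp
      · simp [h]
    rw [Finset.sum_congr rfl fun a _ => this a, Finset.sum_ite_eq]
    simp
  rw [Finset.sum_congr rfl fun i _ => inner i, ← Finset.mul_sum]
lemma master (H : Matrix (Fin n) (Fin n) ℂ)
    (B' : Matrix (Fin n) (Fin n) ℂ →ₗ[ℝ] Matrix (Fin n) (Fin n) ℂ)
    (hpos : ∀ X : Matrix (Fin n) (Fin n) ℂ, X.PosSemidef → (B' X).PosSemidef)
    (hdec : ∀ X : Matrix (Fin n) (Fin n) ℂ, X.IsHermitian → BmapC n X = H * X + X * Hᴴ + B' X)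
    (v w : Fin n → ℝ) :
    0 ≤ PB n v w - 2 * (∑ i, (H i i).re * (w i * v i)) * (∑ j, v j * w j) := by
  classical
  have hsg : ∀ ε : Fin n → Bool, ∀ l, sg ε l = 1 ∨ sg ε l = -1 := fun ε l => sg_cases ε l
  -- nonnegativity of the sum of the B' quadratic forms
  have hsum : (0 : ℂ) ≤ ∑ ε : Fin n → Bool,
      star (fun l => ((sg ε l * w l : ℝ) : ℂ)) ⬝ᵥ
        ((B' (Xv fun l => sg ε l * v l)) *ᵥ fun l => ((sg ε l * w l : ℝ) : ℂ)) :=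
    Finset.sum_nonneg fun ε _ => (hpos _ (Xv_posSemidef _)).dotProduct_mulVec_nonneg _
  -- rewrite each summand
  have hBX : ∀ ε : Fin n → Bool, B' (Xv fun l => sg ε l * v l)
      = BmapC n (Xv fun l => sg ε l * v l)
        - H * (Xv fun l => sg ε l * v l) - (Xv fun l => sg ε l * v l) * Hᴴ := by
    intro ε
    have h := hdec _ (Xv_posSemidef (fun l => sg ε l * v l)).1
    rw [h]
    abel
  have hval : ∀ ε : Fin n → Bool,
      star (fun l => ((sg ε l * w l : ℝ) : ℂ)) ⬝ᵥ
        ((B' (Xv fun l => sg ε l * v l)) *ᵥ fun l => ((sg ε l * w l : ℝ) : ℂ))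
      = ((PB n v w : ℝ) : ℂ)
        - (∑ i, ∑ a, ((sg ε i * w i : ℝ) : ℂ) * H i a * ((sg ε a * v a : ℝ) : ℂ))
            * ((∑ j, v j * w j : ℝ) : ℂ)
        - ((∑ j, v j * w j : ℝ) : ℂ)
            * ∑ i, ∑ a, ((sg ε i * w i : ℝ) : ℂ) * (starRingEnd ℂ) (H i a)
              * ((sg ε a * v a : ℝ) : ℂ) := by
    intro ε
    rw [hBX ε, Matrix.sub_mulVec, Matrix.sub_mulVec, dotProduct_sub, dotProduct_sub,
      qB_eq v w (sg ε) (hsg ε), qH_eq v w (sg ε) (hsg ε) H, qHc_eq v w (sg ε) (hsg ε) H]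
  rw [Finset.sum_congr rfl fun ε _ => hval ε] at hsum
  rw [Finset.sum_sub_distrib, Finset.sum_sub_distrib, Finset.sum_const, Finset.card_univ,
    ← Finset.sum_mul, ← Finset.mul_sum, sum_qsg H v w,
    sum_qsg (fun i a => (starRingEnd ℂ) (H i a)) v w] at hsum
  have hcard : Fintype.card (Fin n → Bool) = 2 ^ n := by
    simp [Fintype.card_fun]
  rw [hcard] at hsum
  set σr := ∑ j, v j * w j with hσr
  set S3r := ∑ i, (H i i).re * (w i * v i) with hS3r
  have hS : (∑ i, ((w i * v i : ℝ) : ℂ) * H i i)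
        + (∑ i, ((w i * v i : ℝ) : ℂ) * (starRingEnd ℂ) (H i i))
      = ∑ i, ((2 * (H i i).re * (w i * v i) : ℝ) : ℂ) := by
    rw [← Finset.sum_add_distrib]
    refine Finset.sum_congr rfl fun i _ => ?_
    rw [← mul_add, Complex.add_conj]
    push_cast
    ring
  have hcast : ∑ i, ((2 * (H i i).re * (w i * v i) : ℝ) : ℂ) = ((2 * S3r : ℝ) : ℂ) := by
    rw [← Complex.ofReal_sum]
    norm_cast
    rw [hS3r, Finset.mul_sum]
    exact Finset.sum_congr rfl fun i _ => by ring
  have heq : 2 ^ n • ((PB n v w : ℝ) : ℂ)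
        - ((((2 : ℝ) ^ n : ℝ) : ℂ) * ∑ i, ((w i * v i : ℝ) : ℂ) * H i i) * ((σr : ℝ) : ℂ)
        - ((σr : ℝ) : ℂ) * ((((2 : ℝ) ^ n : ℝ) : ℂ)
            * ∑ i, ((w i * v i : ℝ) : ℂ) * (starRingEnd ℂ) (H i i))
      = (((2 : ℝ) ^ n * (PB n v w - 2 * S3r * σr) : ℝ) : ℂ) := by
    rw [nsmul_eq_mul]
    have h2 : ((2 ^ n : ℕ) : ℂ) = (((2 : ℝ) ^ n : ℝ) : ℂ) := by push_cast; ring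
    rw [h2]
    have expand : ∀ A B : ℂ,
        (((2 : ℝ) ^ n : ℝ) : ℂ) * ((PB n v w : ℝ) : ℂ)
            - ((((2 : ℝ) ^ n : ℝ) : ℂ) * A) * ((σr : ℝ) : ℂ)
            - ((σr : ℝ) : ℂ) * ((((2 : ℝ) ^ n : ℝ) : ℂ) * B)
          = (((2 : ℝ) ^ n : ℝ) : ℂ) * (((PB n v w : ℝ) : ℂ) - ((σr : ℝ) : ℂ) * (A + B)) := by
      intro A B; ring
    rw [expand, hS, hcast]
    push_cast
    ring
  have hfin : (0 : ℂ) ≤ (((2 : ℝ) ^ n * (PB n v w - 2 * S3r * σr) : ℝ) : ℂ) :=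
    hsum.trans_eq heq
  have hr : (0 : ℝ) ≤ (2 : ℝ) ^ n * (PB n v w - 2 * S3r * σr) := Complex.zero_le_real.mp hfin
  have h2n : (0 : ℝ) < 2 ^ n := by positivity
  by_contra hneg
  push_neg at hneg
  nlinarith [hr, h2n, hneg]

lemma offsum (z : Fin n → ℝ) :
    ∑ i, ∑ j, offc n i j * (z i * z j)
      = qq n * ((∑ i, z i) * (∑ i, z i) - ∑ i, z i * z i)
        + (pp n - qq n) * (2 * (z 0 * (∑ i, z i)) - 2 * (z 0 * z 0)) := by
  classical
  have point : ∀ i j : Fin n, offc n i j * (z i * z j)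
      = qq n * (z i * z j) - qq n * (if i = j then z i * z j else 0)
        + (pp n - qq n) * ((if i = 0 then z i else 0) * z j)
        + (pp n - qq n) * (z i * (if j = 0 then z j else 0))
        - (2 * (pp n - qq n)) * ((if i = 0 then z i else 0) * (if j = 0 then z j else 0)) := by
    intro i j
    unfold offc
    by_cases hij : i = j
    · subst hij
      by_cases h0 : i = 0
      · subst h0; simp; ring
      · simp [h0]
    · by_cases hi : i = 0
      · subst hi
        have hj : ¬(j = 0) := fun h => hij h.symm
        simp [hij, hj]
        ring
      · by_cases hj : j = 0
        · subst hj
          simp [hij, hi]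
          ring
        · simp [hij, hi, hj]
  rw [Finset.sum_congr rfl fun i _ => Finset.sum_congr rfl fun j _ => point i j]
  have h1 : ∑ i : Fin n, ∑ j : Fin n, qq n * (z i * z j)
      = qq n * ((∑ i, z i) * (∑ i, z i)) := by
    rw [Finset.sum_mul_sum, Finset.mul_sum]
    exact Finset.sum_congr rfl fun i _ => by rw [Finset.mul_sum]
  have h2 : ∑ i : Fin n, ∑ j : Fin n, qq n * (if i = j then z i * z j else 0)
      = qq n * (∑ i, z i * z i) := by
    rw [Finset.mul_sum]
    refine Finset.sum_congr rfl fun i _ => ?_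
    rw [← Finset.mul_sum, Finset.sum_ite_eq]
    simp
  have h3 : ∑ i : Fin n, ∑ j : Fin n, (pp n - qq n) * ((if i = 0 then z i else 0) * z j)
      = (pp n - qq n) * (z 0 * ∑ i, z i) := by
    have : ∑ i : Fin n, ∑ j : Fin n, (pp n - qq n) * ((if i = 0 then z i else 0) * z j)
        = (pp n - qq n) * ((∑ i : Fin n, if i = 0 then z i else 0) * (∑ j, z j)) := by
      rw [Finset.sum_mul_sum, Finset.mul_sum]
      exact Finset.sum_congr rfl fun i _ => by rw [Finset.mul_sum]
    rw [this, Finset.sum_ite_eq']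
    simp
  have h4 : ∑ i : Fin n, ∑ j : Fin n, (pp n - qq n) * (z i * (if j = 0 then z j else 0))
      = (pp n - qq n) * ((∑ i, z i) * z 0) := by
    have : ∑ i : Fin n, ∑ j : Fin n, (pp n - qq n) * (z i * (if j = 0 then z j else 0))
        = (pp n - qq n) * ((∑ i, z i) * (∑ j : Fin n, if j = 0 then z j else 0)) := by
      rw [Finset.sum_mul_sum, Finset.mul_sum]
      exact Finset.sum_congr rfl fun i _ => by rw [Finset.mul_sum]
    rw [this, Finset.sum_ite_eq']
    simp
  have h5 : ∑ i : Fin n, ∑ j : Fin n,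
        (2 * (pp n - qq n)) * ((if i = 0 then z i else 0) * (if j = 0 then z j else 0))
      = (2 * (pp n - qq n)) * (z 0 * z 0) := by
    have : ∑ i : Fin n, ∑ j : Fin n,
          (2 * (pp n - qq n)) * ((if i = 0 then z i else 0) * (if j = 0 then z j else 0))
        = (2 * (pp n - qq n)) * ((∑ i : Fin n, if i = 0 then z i else 0)
            * (∑ j : Fin n, if j = 0 then z j else 0)) := by
      rw [Finset.sum_mul_sum, Finset.mul_sum]
      exact Finset.sum_congr rfl fun i _ => by rw [Finset.mul_sum]
    rw [this, Finset.sum_ite_eq']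
    simp
  simp only [Finset.sum_add_distrib, Finset.sum_sub_distrib]
  rw [h1, h2, h3, h4, h5]
  ring
lemma sum_erase0_const (c : ℝ) :
    ∑ _l ∈ Finset.univ.erase (0 : Fin n), c = ((n : ℝ) - 1) * c := by
  rw [Finset.sum_const, nsmul_eq_mul, Finset.card_erase_of_mem (Finset.mem_univ 0),
    Finset.card_univ, Fintype.card_fin]
  have h1n : 1 ≤ n := NeZero.one_le
  rw [Nat.cast_sub h1n]
  simp

lemma sum_if0_eval (f g : Fin n → ℝ) :
    ∑ l : Fin n, (if l = 0 then f l else g l)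
      = f 0 + ∑ l ∈ Finset.univ.erase 0, g l := by
  rw [← Finset.add_sum_erase _ _ (Finset.mem_univ (0 : Fin n))]
  simp only [if_pos rfl]
  congr 1
  exact Finset.sum_congr rfl fun l hl => by
    simp [Finset.ne_of_mem_erase hl]

lemma test1 (H : Matrix (Fin n) (Fin n) ℂ)
    (B' : Matrix (Fin n) (Fin n) ℂ →ₗ[ℝ] Matrix (Fin n) (Fin n) ℂ)
    (hpos : ∀ X : Matrix (Fin n) (Fin n) ℂ, X.PosSemidef → (B' X).PosSemidef)
    (hdec : ∀ X : Matrix (Fin n) (Fin n) ℂ, X.IsHermitian → BmapC n X = H * X + X * Hᴴ + B' X)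
    (t : ℝ) :
    0 ≤ -(qq n * ((((n : ℝ) - 1) * (1 - t) - ((n : ℝ) - 1)) * (((n : ℝ) - 1) * (1 - t) - ((n : ℝ) - 1))
            - ((((n : ℝ) - 1) * (1 - t)) * (((n : ℝ) - 1) * (1 - t)) + ((n : ℝ) - 1)))
          + (pp n - qq n) * (2 * ((((n : ℝ) - 1) * (1 - t)) * (((n : ℝ) - 1) * (1 - t) - ((n : ℝ) - 1)))
            - 2 * ((((n : ℝ) - 1) * (1 - t)) * (((n : ℝ) - 1) * (1 - t)))))
        - 2 * (((((n : ℝ) - 1) * (1 - t)) + 1) * (H 0 0).re - ∑ i, (H i i).re)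
            * (((n : ℝ) - 1) * (1 - t) - ((n : ℝ) - 1)) := by
  classical
  set α : ℝ := ((n : ℝ) - 1) * (1 - t) with hα
  set w1 : Fin n → ℝ := fun l => if l = 0 then α else -1 with hw1
  have hm := master H B' hpos hdec (fun _ => 1) w1
  -- evaluate the diagonal part of PB
  have hdiag : (∑ i : Fin n, cc n i * (((fun _ => (1 : ℝ)) (i + 1)) ^ 2 - ((fun _ => (1 : ℝ)) i) ^ 2)
      * (w1 i) ^ 2) = 0 := by
    simp
  -- pointwise: (v i * w i) = w1 i
  have hpw : ∀ i j : Fin n, offc n i j * ((fun _ => (1:ℝ)) i * w1 i) * ((fun _ => (1:ℝ)) j * w1 j)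
      = offc n i j * (w1 i * w1 j) := by
    intro i j; simp; ring
  have hPB : PB n (fun _ => 1) w1
      = -(qq n * ((∑ i, w1 i) * (∑ i, w1 i) - ∑ i, w1 i * w1 i)
          + (pp n - qq n) * (2 * (w1 0 * (∑ i, w1 i)) - 2 * (w1 0 * w1 0))) := by
    unfold PB
    rw [hdiag,
      Finset.sum_congr rfl fun i _ => Finset.sum_congr rfl fun j _ => hpw i j,
      offsum w1]
    ring
  have hσ : ∑ i, w1 i = α - ((n : ℝ) - 1) := by
    rw [hw1, sum_if0_eval (fun _ => α) (fun _ => -1), sum_erase0_const]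
    ring
  have hν : ∑ i, w1 i * w1 i = α * α + ((n : ℝ) - 1) := by
    have : ∀ i : Fin n, w1 i * w1 i = if i = 0 then α * α else 1 := by
      intro i
      by_cases h : i = 0 <;> simp [hw1, h]
    rw [Finset.sum_congr rfl fun i _ => this i, sum_if0_eval (fun _ => α * α) (fun _ => 1),
      sum_erase0_const]
    ring
  have hz0 : w1 0 = α := by simp [hw1]
  have hS : ∑ i, (H i i).re * (w1 i * 1)
      = (α + 1) * (H 0 0).re - ∑ i, (H i i).re := by
    have hptS : ∀ i : Fin n, (H i i).re * (w1 i * 1)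
        = if i = 0 then α * (H i i).re else -(H i i).re := by
      intro i
      by_cases h : i = 0 <;> simp [hw1, h, mul_comm]
    rw [Finset.sum_congr rfl fun i _ => hptS i,
      sum_if0_eval (fun i => α * (H i i).re) (fun i => -(H i i).re)]
    rw [Finset.sum_neg_distrib, Finset.sum_erase_eq_sub (Finset.mem_univ (0 : Fin n))]
    ring
  have hσ' : ∑ j, 1 * w1 j = α - ((n : ℝ) - 1) := by
    rw [Finset.sum_congr rfl fun j _ => one_mul (w1 j), hσ]
  rw [hPB, hσ, hν, hz0, hS, hσ'] at hm
  calc (0:ℝ) ≤ _ := hm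
  _ = _ := by ring
/-- exponent function for the cyclic weight vector -/
def ee (n : ℕ) [NeZero n] (k : Fin n) (l : Fin n) : ℕ :=
  if l = k then 0 else n - ((l - k : Fin n) : ℕ)

lemma ee_succ (hn : 3 ≤ n) (k l : Fin n) (hl : l ≠ k) : ee n k l = ee n k (l + 1) + 1 := by
  classical
  have hm0 : ((l - k : Fin n) : ℕ) ≠ 0 := by
    intro h
    exact hl (sub_eq_zero.mp (Fin.ext (by simpa using h)))
  set m := ((l - k : Fin n) : ℕ) with hm
  have hmlt : m < n := (l - k).isLt
  have h2 : l + 1 - k = (l - k) + 1 := by rw [sub_add_eq_add_sub]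
  have hval : ((l + 1 - k : Fin n) : ℕ) = (m + 1) % n := by
    rw [h2, Fin.val_add, Fin.val_one']
    have h1n : 1 % n = 1 := Nat.mod_eq_of_lt (by omega)
    rw [h1n]
  by_cases hlk : l + 1 = k
  · have hz : ((l + 1 - k : Fin n) : ℕ) = 0 := by
      rw [hlk]; simp
    have : (m + 1) % n = 0 := by rw [← hval, hz]
    have hmn : m + 1 = n := by
      rcases Nat.lt_or_ge (m + 1) n with h | h
      · rw [Nat.mod_eq_of_lt h] at this; omega
      · omega
    have hek : ee n k (l + 1) = 0 := by rw [hlk]; simp [ee]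
    rw [hek]
    simp only [ee, if_neg hl]
    omega
  · have hmn : m + 1 ≠ n := by
      intro h
      apply hlk
      have : ((l + 1 - k : Fin n) : ℕ) = 0 := by rw [hval, h]; simp
      have h0 : (l + 1 - k : Fin n) = 0 := Fin.ext (by simpa using this)
      exact sub_eq_zero.mp h0
    have hv2 : ((l + 1 - k : Fin n) : ℕ) = m + 1 := by
      rw [hval, Nat.mod_eq_of_lt (by omega)]
    have hl1k : l + 1 ≠ k := hlk
    simp only [ee, if_neg hl, if_neg hl1k, hv2]
    omega

lemma sum_if0k_eval (hn : 3 ≤ n) (k : Fin n) (hk : k ≠ 0) (f g : Fin n → ℝ) (c : ℝ) :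
    ∑ l : Fin n, (if l = 0 then f l else if l = k then g l else c)
      = f 0 + g k + ((n : ℝ) - 2) * c := by
  classical
  rw [← Finset.add_sum_erase _ _ (Finset.mem_univ (0 : Fin n))]
  have hkmem : k ∈ Finset.univ.erase (0 : Fin n) :=
    Finset.mem_erase.mpr ⟨hk, Finset.mem_univ k⟩
  rw [← Finset.add_sum_erase _ _ hkmem]
  have hval0 : (if (0 : Fin n) = 0 then f 0 else if (0 : Fin n) = k then g 0 else c) = f 0 := by
    simp
  have hvalk : (if k = 0 then f k else if k = k then g k else c) = g k := by
    simp [hk]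
  have hrest : ∑ l ∈ (Finset.univ.erase (0 : Fin n)).erase k,
      (if l = 0 then f l else if l = k then g l else c)
      = ((n : ℝ) - 2) * c := by
    rw [Finset.sum_congr rfl (fun l hl => ?_), Finset.sum_const]
    · rw [Finset.card_erase_of_mem hkmem, Finset.card_erase_of_mem (Finset.mem_univ 0),
        Finset.card_univ, Fintype.card_fin, nsmul_eq_mul]
      have hc : ((n - 1 - 1 : ℕ) : ℝ) = (n : ℝ) - 2 := by
        rw [Nat.sub_sub, Nat.cast_sub (by omega)]
        norm_num
      rw [hc]
    · have hlk : l ≠ k := Finset.ne_of_mem_erase hl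
      have hl0 : l ≠ 0 := Finset.ne_of_mem_erase (Finset.mem_of_mem_erase hl)
      simp [hlk, hl0]
  rw [hval0, hvalk, hrest]
  ring
lemma sum_if0k_eval' (k : Fin n) (hk : k ≠ 0) (f g h : Fin n → ℝ) :
    ∑ l : Fin n, (if l = 0 then f l else if l = k then g l else h l)
      = f 0 + g k + ((∑ l, h l) - h 0 - h k) := by
  classical
  rw [← Finset.add_sum_erase _ _ (Finset.mem_univ (0 : Fin n))]
  have hkmem : k ∈ Finset.univ.erase (0 : Fin n) :=
    Finset.mem_erase.mpr ⟨hk, Finset.mem_univ k⟩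
  rw [← Finset.add_sum_erase _ _ hkmem]
  have hval0 : (if (0 : Fin n) = 0 then f 0 else if (0 : Fin n) = k then g 0 else h 0) = f 0 := by
    simp
  have hvalk : (if k = 0 then f k else if k = k then g k else h k) = g k := by
    simp [hk]
  have hrest : ∑ l ∈ (Finset.univ.erase (0 : Fin n)).erase k,
      (if l = 0 then f l else if l = k then g l else h l)
      = (∑ l, h l) - h 0 - h k := by
    have hcongr : ∑ l ∈ (Finset.univ.erase (0 : Fin n)).erase k,
        (if l = 0 then f l else if l = k then g l else h l)
        = ∑ l ∈ (Finset.univ.erase (0 : Fin n)).erase k, h l :=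
      Finset.sum_congr rfl fun l hl => by
        have hlk : l ≠ k := Finset.ne_of_mem_erase hl
        have hl0 : l ≠ 0 := Finset.ne_of_mem_erase (Finset.mem_of_mem_erase hl)
        simp [hlk, hl0]
    rw [hcongr, Finset.sum_erase_eq_sub hkmem,
      Finset.sum_erase_eq_sub (Finset.mem_univ (0 : Fin n))]
    try ring
  rw [hval0, hvalk, hrest]
  ring

lemma test2 (hn : 3 ≤ n) (H : Matrix (Fin n) (Fin n) ℂ)
    (B' : Matrix (Fin n) (Fin n) ℂ →ₗ[ℝ] Matrix (Fin n) (Fin n) ℂ)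
    (hpos : ∀ X : Matrix (Fin n) (Fin n) ℂ, X.PosSemidef → (B' X).PosSemidef)
    (hdec : ∀ X : Matrix (Fin n) (Fin n) ℂ, X.IsHermitian → BmapC n X = H * X + X * Hᴴ + B' X)
    (k : Fin n) (hk : k ≠ 0) (t K : ℝ) (hK : 0 < K) :
    0 ≤ (K ^ 2 - 1) * ((((n : ℝ) - 2) * (1 + t)) * (((n : ℝ) - 2) * (1 + t))
            + ((n : ℝ) - 2) * ((n : ℝ) - 1) ^ 2)
        - (qq n * (((((n : ℝ) - 2) * (1 + t)) - ((n : ℝ) - 2)) * ((((n : ℝ) - 2) * (1 + t)) - ((n : ℝ) - 2))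
              - ((((n : ℝ) - 2) * (1 + t)) * (((n : ℝ) - 2) * (1 + t)) + ((n : ℝ) - 2)))
            + (pp n - qq n) * (2 * ((((n : ℝ) - 2) * (1 + t)) * ((((n : ℝ) - 2) * (1 + t)) - ((n : ℝ) - 2)))
              - 2 * ((((n : ℝ) - 2) * (1 + t)) * (((n : ℝ) - 2) * (1 + t)))))
        - 2 * (((((n : ℝ) - 2) * (1 + t)) + 1) * (H 0 0).re + (H k k).re - ∑ i, (H i i).re)
            * ((((n : ℝ) - 2) * (1 + t)) - ((n : ℝ) - 2)) := by
  classical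
  have hKne : K ≠ 0 := ne_of_gt hK
  set β : ℝ := ((n : ℝ) - 2) * (1 + t) with hβ
  set z2 : Fin n → ℝ := fun l => if l = 0 then β else if l = k then 0 else -1 with hz2
  set v2 : Fin n → ℝ := fun l => (K⁻¹) ^ (ee n k l) with hv2
  set w2 : Fin n → ℝ := fun l => z2 l * K ^ (ee n k l) with hw2
  have hm := master H B' hpos hdec v2 w2
  have hvw : ∀ l, v2 l * w2 l = z2 l := by
    intro l
    simp only [hv2, hw2, inv_pow]
    field_simp
  have hwz : ∀ l, w2 l * v2 l = z2 l := fun l => by rw [mul_comm]; exact hvw l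
  have hz2k : z2 k = 0 := by simp [hz2, hk]
  have hw2k : w2 k = 0 := by simp only [hw2, hz2k, zero_mul]
  have hz20 : z2 0 = β := by simp [hz2]
  have hstep : ∀ l, l ≠ k → v2 (l + 1) * w2 l = K * z2 l := by
    intro l hl
    have he := ee_succ hn k l hl
    simp only [hv2, hw2, he, pow_succ, inv_pow]
    field_simp
  have hdiagpt : ∀ l : Fin n, cc n l * ((v2 (l + 1)) ^ 2 - (v2 l) ^ 2) * (w2 l) ^ 2
      = (K ^ 2 - 1) * (cc n l * (z2 l * z2 l)) := by
    intro l
    by_cases hl : l = k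
    · subst hl; rw [hw2k, hz2k]; ring
    · have h1 := hstep l hl
      have h2 := hvw l
      calc cc n l * ((v2 (l + 1)) ^ 2 - (v2 l) ^ 2) * (w2 l) ^ 2
          = cc n l * ((v2 (l + 1) * w2 l) ^ 2 - (v2 l * w2 l) ^ 2) := by ring
        _ = cc n l * ((K * z2 l) ^ 2 - (z2 l) ^ 2) := by rw [h1, h2]
        _ = (K ^ 2 - 1) * (cc n l * (z2 l * z2 l)) := by ring
  have hccz : ∑ l, cc n l * (z2 l * z2 l) = β * β + ((n : ℝ) - 2) * ((n : ℝ) - 1) ^ 2 := by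
    have hpt : ∀ l : Fin n, cc n l * (z2 l * z2 l)
        = if l = 0 then β * β else if l = k then 0 else ((n : ℝ) - 1) ^ 2 := by
      intro l
      by_cases h0 : l = 0
      · subst h0
        simp [cc, hz2]
      · by_cases hlk : l = k
        · subst hlk; simp [hz2, hk, h0]
        · simp [cc, hz2, h0, hlk]
    rw [Finset.sum_congr rfl fun l _ => hpt l,
      sum_if0k_eval hn k hk (fun _ => β * β) (fun _ => 0) (((n : ℝ) - 1) ^ 2)]
    ring
  have hσ2 : ∑ l, z2 l = β - ((n : ℝ) - 2) := by
    have : ∀ l : Fin n, z2 l = if l = 0 then β else if l = k then 0 else -1 := fun l => rfl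
    rw [Finset.sum_congr rfl fun l _ => this l,
      sum_if0k_eval hn k hk (fun _ => β) (fun _ => 0) (-1)]
    ring
  have hν2 : ∑ l, z2 l * z2 l = β * β + ((n : ℝ) - 2) := by
    have hpt : ∀ l : Fin n, z2 l * z2 l
        = if l = 0 then β * β else if l = k then 0 else 1 := by
      intro l
      by_cases h0 : l = 0
      · subst h0; simp [hz2]
      · by_cases hlk : l = k
        · subst hlk; simp [hz2, hk, h0]
        · simp [hz2, h0, hlk]
    rw [Finset.sum_congr rfl fun l _ => hpt l,
      sum_if0k_eval hn k hk (fun _ => β * β) (fun _ => 0) 1]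
    ring
  have hS2 : ∑ i, (H i i).re * (w2 i * v2 i)
      = (β + 1) * (H 0 0).re + (H k k).re - ∑ i, (H i i).re := by
    have hpt : ∀ i : Fin n, (H i i).re * (w2 i * v2 i)
        = if i = 0 then β * (H i i).re else if i = k then 0 else -(H i i).re := by
      intro i
      rw [hwz i]
      by_cases h0 : i = 0
      · subst h0; simp [hz2, mul_comm]
      · by_cases hlk : i = k
        · subst hlk; simp [hz2, hk, h0]
        · simp [hz2, h0, hlk]
    rw [Finset.sum_congr rfl fun i _ => hpt i,
      sum_if0k_eval' k hk (fun i => β * (H i i).re) (fun _ => 0) (fun i => -(H i i).re)]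
    rw [Finset.sum_neg_distrib]
    ring
  have hσ2' : ∑ j, v2 j * w2 j = β - ((n : ℝ) - 2) := by
    rw [Finset.sum_congr rfl fun j _ => hvw j, hσ2]
  have hPB : PB n v2 w2
      = (K ^ 2 - 1) * (β * β + ((n : ℝ) - 2) * ((n : ℝ) - 1) ^ 2)
        - (qq n * ((β - ((n : ℝ) - 2)) * (β - ((n : ℝ) - 2)) - (β * β + ((n : ℝ) - 2)))
          + (pp n - qq n) * (2 * (β * (β - ((n : ℝ) - 2))) - 2 * (β * β))) := by
    unfold PB
    rw [Finset.sum_congr rfl fun l _ => hdiagpt l, ← Finset.mul_sum, hccz]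
    rw [Finset.sum_congr rfl fun i _ => Finset.sum_congr rfl fun j _ =>
      (by rw [hvw i, hvw j, mul_assoc] :
        offc n i j * (v2 i * w2 i) * (v2 j * w2 j) = offc n i j * (z2 i * z2 j))]
    rw [offsum z2, hσ2, hν2, hz20]
  rw [hPB, hS2, hσ2'] at hm
  calc (0 : ℝ) ≤ _ := hm
  _ = _ := by ring

set_option maxHeartbeats 1600000 in
theorem BmapC_indecomposable_aux (n : ℕ) [NeZero n] (hn : 3 ≤ n)
    (H : Matrix (Fin n) (Fin n) ℂ)
    (B' : Matrix (Fin n) (Fin n) ℂ →ₗ[ℝ] Matrix (Fin n) (Fin n) ℂ)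
    (hpos : ∀ X : Matrix (Fin n) (Fin n) ℂ, X.PosSemidef → (B' X).PosSemidef)
    (hdec : ∀ X : Matrix (Fin n) (Fin n) ℂ, X.IsHermitian → BmapC n X = H * X + X * Hᴴ + B' X) :
    False := by
  classical
  have hx3 : (3 : ℝ) ≤ (n : ℝ) := by exact_mod_cast hn
  set h0 : ℝ := (H 0 0).re with hh0
  have hden : (0 : ℝ) < 1 + 2 * h0 ^ 2 := by positivity
  set t : ℝ := 1 / (2 * (1 + 2 * h0 ^ 2)) with ht
  have ht0 : 0 < t := by rw [ht]; positivity
  have hkey : 2 * (1 + 2 * h0 ^ 2) * (1 + 2 * t * h0) = 2 * (1 + 2 * h0 ^ 2) + 2 * h0 := by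
    rw [ht]
    field_simp
    try ring
  have hNum : (0 : ℝ) < 2 * (1 + 2 * h0 ^ 2) + 2 * h0 := by
    nlinarith [sq_nonneg (2 * h0 + 1), sq_nonneg h0]
  have hpos2 : (0 : ℝ) < 1 + 2 * t * h0 := by
    by_contra hc
    push_neg at hc
    nlinarith [hkey, hNum, hden, hc]
  have e1 : (0:ℝ) < (n:ℝ) - 2 := by linarith
  have e2 : (0:ℝ) < ((n:ℝ) - 1) ^ 2 := by nlinarith
  have hCz0 : (0 : ℝ) < (((n : ℝ) - 2) * (1 + t)) * (((n : ℝ) - 2) * (1 + t)) + ((n : ℝ) - 2) * ((n : ℝ) - 1) ^ 2 := by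
    nlinarith [sq_nonneg ((((n : ℝ) - 2) * (1 + t))), mul_pos e1 e2]
  set Cz : ℝ := (((n : ℝ) - 2) * (1 + t)) * (((n : ℝ) - 2) * (1 + t)) + ((n : ℝ) - 2) * ((n : ℝ) - 1) ^ 2 with hCzdef
  set K : ℝ := ((n : ℝ) - 2) * t / Real.sqrt Cz with hKdef
  have hsqpos : 0 < Real.sqrt Cz := Real.sqrt_pos.mpr hCz0
  have hK0 : 0 < K := by
    rw [hKdef]
    have : (0:ℝ) < (n : ℝ) - 2 := by linarith
    positivity
  have hK2 : K ^ 2 * Cz = ((n : ℝ) - 2) ^ 2 * t ^ 2 := by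
    rw [hKdef, div_pow, Real.sq_sqrt hCz0.le]
    field_simp
  have hA := test1 H B' hpos hdec t
  have hT2sum : (0 : ℝ) ≤ ∑ k ∈ Finset.univ.erase (0 : Fin n),
      ((K ^ 2 - 1) * ((((n : ℝ) - 2) * (1 + t)) * (((n : ℝ) - 2) * (1 + t))
            + ((n : ℝ) - 2) * ((n : ℝ) - 1) ^ 2)
        - (qq n * (((((n : ℝ) - 2) * (1 + t)) - ((n : ℝ) - 2)) * ((((n : ℝ) - 2) * (1 + t)) - ((n : ℝ) - 2))
              - ((((n : ℝ) - 2) * (1 + t)) * (((n : ℝ) - 2) * (1 + t)) + ((n : ℝ) - 2)))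
            + (pp n - qq n) * (2 * ((((n : ℝ) - 2) * (1 + t)) * ((((n : ℝ) - 2) * (1 + t)) - ((n : ℝ) - 2)))
              - 2 * ((((n : ℝ) - 2) * (1 + t)) * (((n : ℝ) - 2) * (1 + t)))))
        - 2 * (((((n : ℝ) - 2) * (1 + t)) + 1) * (H 0 0).re + (H k k).re - ∑ i, (H i i).re)
            * ((((n : ℝ) - 2) * (1 + t)) - ((n : ℝ) - 2))) :=
    Finset.sum_nonneg fun k hk =>
      test2 hn H B' hpos hdec k (Finset.ne_of_mem_erase hk) t K hK0
  -- evaluate the k-sum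
  have hsumval : ∑ k ∈ Finset.univ.erase (0 : Fin n),
      ((K ^ 2 - 1) * ((((n : ℝ) - 2) * (1 + t)) * (((n : ℝ) - 2) * (1 + t))
            + ((n : ℝ) - 2) * ((n : ℝ) - 1) ^ 2)
        - (qq n * (((((n : ℝ) - 2) * (1 + t)) - ((n : ℝ) - 2)) * ((((n : ℝ) - 2) * (1 + t)) - ((n : ℝ) - 2))
              - ((((n : ℝ) - 2) * (1 + t)) * (((n : ℝ) - 2) * (1 + t)) + ((n : ℝ) - 2)))
            + (pp n - qq n) * (2 * ((((n : ℝ) - 2) * (1 + t)) * ((((n : ℝ) - 2) * (1 + t)) - ((n : ℝ) - 2)))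
              - 2 * ((((n : ℝ) - 2) * (1 + t)) * (((n : ℝ) - 2) * (1 + t)))))
        - 2 * (((((n : ℝ) - 2) * (1 + t)) + 1) * (H 0 0).re + (H k k).re - ∑ i, (H i i).re)
            * ((((n : ℝ) - 2) * (1 + t)) - ((n : ℝ) - 2)))
      = ((n : ℝ) - 1) * ((K ^ 2 - 1) * ((((n : ℝ) - 2) * (1 + t)) * (((n : ℝ) - 2) * (1 + t)) + ((n : ℝ) - 2) * ((n : ℝ) - 1) ^ 2)
        - (qq n * (((((n : ℝ) - 2) * (1 + t)) - ((n : ℝ) - 2)) * ((((n : ℝ) - 2) * (1 + t)) - ((n : ℝ) - 2))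
              - ((((n : ℝ) - 2) * (1 + t)) * (((n : ℝ) - 2) * (1 + t)) + ((n : ℝ) - 2)))
            + (pp n - qq n) * (2 * ((((n : ℝ) - 2) * (1 + t)) * ((((n : ℝ) - 2) * (1 + t)) - ((n : ℝ) - 2)))
              - 2 * ((((n : ℝ) - 2) * (1 + t)) * (((n : ℝ) - 2) * (1 + t)))))
        - 2 * (((((n : ℝ) - 2) * (1 + t)) + 1) * (H 0 0).re - ∑ i, (H i i).re) * ((((n : ℝ) - 2) * (1 + t)) - ((n : ℝ) - 2)))
        + (-2 * ((((n : ℝ) - 2) * (1 + t)) - ((n : ℝ) - 2))) * ((∑ i, (H i i).re) - (H 0 0).re) := by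
    have hpt : ∀ k ∈ Finset.univ.erase (0 : Fin n),
        ((K ^ 2 - 1) * ((((n : ℝ) - 2) * (1 + t)) * (((n : ℝ) - 2) * (1 + t))
            + ((n : ℝ) - 2) * ((n : ℝ) - 1) ^ 2)
        - (qq n * (((((n : ℝ) - 2) * (1 + t)) - ((n : ℝ) - 2)) * ((((n : ℝ) - 2) * (1 + t)) - ((n : ℝ) - 2))
              - ((((n : ℝ) - 2) * (1 + t)) * (((n : ℝ) - 2) * (1 + t)) + ((n : ℝ) - 2)))
            + (pp n - qq n) * (2 * ((((n : ℝ) - 2) * (1 + t)) * ((((n : ℝ) - 2) * (1 + t)) - ((n : ℝ) - 2)))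
              - 2 * ((((n : ℝ) - 2) * (1 + t)) * (((n : ℝ) - 2) * (1 + t)))))
        - 2 * (((((n : ℝ) - 2) * (1 + t)) + 1) * (H 0 0).re + (H k k).re - ∑ i, (H i i).re)
            * ((((n : ℝ) - 2) * (1 + t)) - ((n : ℝ) - 2)))
        = ((K ^ 2 - 1) * ((((n : ℝ) - 2) * (1 + t)) * (((n : ℝ) - 2) * (1 + t)) + ((n : ℝ) - 2) * ((n : ℝ) - 1) ^ 2)
        - (qq n * (((((n : ℝ) - 2) * (1 + t)) - ((n : ℝ) - 2)) * ((((n : ℝ) - 2) * (1 + t)) - ((n : ℝ) - 2))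
              - ((((n : ℝ) - 2) * (1 + t)) * (((n : ℝ) - 2) * (1 + t)) + ((n : ℝ) - 2)))
            + (pp n - qq n) * (2 * ((((n : ℝ) - 2) * (1 + t)) * ((((n : ℝ) - 2) * (1 + t)) - ((n : ℝ) - 2)))
              - 2 * ((((n : ℝ) - 2) * (1 + t)) * (((n : ℝ) - 2) * (1 + t)))))
        - 2 * (((((n : ℝ) - 2) * (1 + t)) + 1) * (H 0 0).re - ∑ i, (H i i).re) * ((((n : ℝ) - 2) * (1 + t)) - ((n : ℝ) - 2)))
          + (-2 * ((((n : ℝ) - 2) * (1 + t)) - ((n : ℝ) - 2))) * (H k k).re := by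
      intro k _
      ring
    rw [Finset.sum_congr rfl hpt, Finset.sum_add_distrib, sum_erase0_const, ← Finset.mul_sum,
      Finset.sum_erase_eq_sub (Finset.mem_univ (0 : Fin n))]
  rw [hsumval] at hT2sum
  -- combine
  have hcomb : (0 : ℝ) ≤ ((n : ℝ) - 2) ^ 2 * (-(qq n * (((((n : ℝ) - 1) * (1 - t)) - ((n : ℝ) - 1)) * ((((n : ℝ) - 1) * (1 - t)) - ((n : ℝ) - 1))
            - ((((n : ℝ) - 1) * (1 - t)) * (((n : ℝ) - 1) * (1 - t)) + ((n : ℝ) - 1)))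
          + (pp n - qq n) * (2 * ((((n : ℝ) - 1) * (1 - t)) * ((((n : ℝ) - 1) * (1 - t)) - ((n : ℝ) - 1)))
            - 2 * ((((n : ℝ) - 1) * (1 - t)) * (((n : ℝ) - 1) * (1 - t)))))
        - 2 * (((((n : ℝ) - 1) * (1 - t)) + 1) * (H 0 0).re - ∑ i, (H i i).re)
            * ((((n : ℝ) - 1) * (1 - t)) - ((n : ℝ) - 1)))
      + ((n : ℝ) - 1) * (((n : ℝ) - 1) * ((K ^ 2 - 1) * ((((n : ℝ) - 2) * (1 + t)) * (((n : ℝ) - 2) * (1 + t)) + ((n : ℝ) - 2) * ((n : ℝ) - 1) ^ 2)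
        - (qq n * (((((n : ℝ) - 2) * (1 + t)) - ((n : ℝ) - 2)) * ((((n : ℝ) - 2) * (1 + t)) - ((n : ℝ) - 2))
              - ((((n : ℝ) - 2) * (1 + t)) * (((n : ℝ) - 2) * (1 + t)) + ((n : ℝ) - 2)))
            + (pp n - qq n) * (2 * ((((n : ℝ) - 2) * (1 + t)) * ((((n : ℝ) - 2) * (1 + t)) - ((n : ℝ) - 2)))
              - 2 * ((((n : ℝ) - 2) * (1 + t)) * (((n : ℝ) - 2) * (1 + t)))))
        - 2 * (((((n : ℝ) - 2) * (1 + t)) + 1) * (H 0 0).re - ∑ i, (H i i).re) * ((((n : ℝ) - 2) * (1 + t)) - ((n : ℝ) - 2)))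
        + (-2 * ((((n : ℝ) - 2) * (1 + t)) - ((n : ℝ) - 2))) * ((∑ i, (H i i).re) - (H 0 0).re)) :=
    add_nonneg (mul_nonneg (sq_nonneg _) hA)
      (mul_nonneg (by linarith : (0:ℝ) ≤ (n : ℝ) - 1) hT2sum)
  have hid : ((n : ℝ) - 2) ^ 2 * (-(qq n * (((((n : ℝ) - 1) * (1 - t)) - ((n : ℝ) - 1)) * ((((n : ℝ) - 1) * (1 - t)) - ((n : ℝ) - 1))
            - ((((n : ℝ) - 1) * (1 - t)) * (((n : ℝ) - 1) * (1 - t)) + ((n : ℝ) - 1)))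
          + (pp n - qq n) * (2 * ((((n : ℝ) - 1) * (1 - t)) * ((((n : ℝ) - 1) * (1 - t)) - ((n : ℝ) - 1)))
            - 2 * ((((n : ℝ) - 1) * (1 - t)) * (((n : ℝ) - 1) * (1 - t)))))
        - 2 * (((((n : ℝ) - 1) * (1 - t)) + 1) * (H 0 0).re - ∑ i, (H i i).re)
            * ((((n : ℝ) - 1) * (1 - t)) - ((n : ℝ) - 1)))
      + ((n : ℝ) - 1) * (((n : ℝ) - 1) * ((K ^ 2 - 1) * ((((n : ℝ) - 2) * (1 + t)) * (((n : ℝ) - 2) * (1 + t)) + ((n : ℝ) - 2) * ((n : ℝ) - 1) ^ 2)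
        - (qq n * (((((n : ℝ) - 2) * (1 + t)) - ((n : ℝ) - 2)) * ((((n : ℝ) - 2) * (1 + t)) - ((n : ℝ) - 2))
              - ((((n : ℝ) - 2) * (1 + t)) * (((n : ℝ) - 2) * (1 + t)) + ((n : ℝ) - 2)))
            + (pp n - qq n) * (2 * ((((n : ℝ) - 2) * (1 + t)) * ((((n : ℝ) - 2) * (1 + t)) - ((n : ℝ) - 2)))
              - 2 * ((((n : ℝ) - 2) * (1 + t)) * (((n : ℝ) - 2) * (1 + t)))))
        - 2 * (((((n : ℝ) - 2) * (1 + t)) + 1) * (H 0 0).re - ∑ i, (H i i).re) * ((((n : ℝ) - 2) * (1 + t)) - ((n : ℝ) - 2)))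
        + (-2 * ((((n : ℝ) - 2) * (1 + t)) - ((n : ℝ) - 2))) * ((∑ i, (H i i).re) - (H 0 0).re))
      = ((n : ℝ) - 1) ^ 2 * (((n : ℝ) - 2) ^ 2 * (-(2*t) - t^2 - 4*t^2*h0) + K^2 * Cz) := by
    simp only [pp, qq, hCzdef, hh0]
    ring
  rw [hid] at hcomb
  have hEq2 : ((n : ℝ) - 1) ^ 2 * (((n : ℝ) - 2) ^ 2 * (-(2*t) - t^2 - 4*t^2*h0) + K^2 * Cz)
      = -(((n : ℝ) - 1) ^ 2 * ((n : ℝ) - 2) ^ 2 * (2 * t * (1 + 2 * t * h0))) := by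
    linear_combination (((n : ℝ) - 1) ^ 2) * hK2
  rw [hEq2] at hcomb
  have hlt : (0 : ℝ) < ((n : ℝ) - 1) ^ 2 * ((n : ℝ) - 2) ^ 2 * (2 * t * (1 + 2 * t * h0)) := by
    have h1 : (0:ℝ) < ((n : ℝ) - 1) ^ 2 := e2
    have h2 : (0:ℝ) < ((n : ℝ) - 2) ^ 2 := by positivity
    have h3 : (0:ℝ) < 2 * t * (1 + 2 * t * h0) := by positivity
    exact mul_pos (mul_pos h1 h2) h3
  linarith [hcomb, hlt]

end BmapCProof

/-- **Indecomposability of the exotic drift `B`, complex case.**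
For `n ≥ 3` there exist no matrix `H ∈ M_n(ℂ)` and no real-linear map `B'` on complex Hermitian
matrices sending positive semidefinite matrices to positive semidefinite matrices such that
`B X = H X + X H* + B' X` for every Hermitian `X`; i.e. `B` is not the sum of an endomorphism
of the PSD cone and an element of the Lie algebra of its automorphism group. -/
theorem BmapC_indecomposable (n : ℕ) [NeZero n] (hn : 3 ≤ n) :
    ¬∃ (H : Matrix (Fin n) (Fin n) ℂ)
        (B' : Matrix (Fin n) (Fin n) ℂ →ₗ[ℝ] Matrix (Fin n) (Fin n) ℂ),
      (∀ X : Matrix (Fin n) (Fin n) ℂ, X.PosSemidef → (B' X).PosSemidef) ∧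
      (∀ X : Matrix (Fin n) (Fin n) ℂ, X.IsHermitian → BmapC n X = H * X + X * Hᴴ + B' X) := by
  rintro ⟨H, B', hpos, hdec⟩
  exact BmapCProof.BmapC_indecomposable_aux n hn H B' hpos hdec
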